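/- For the abstraction of multipolynomials (tuples of polynomials, with abstraction the matrix whose i-th column is α(Pᵢ)): the abstraction of a coefficient-wise-max union of multipolynomials equals the entrywise union of their abstractions, i.e., α(P ⊔ Q) = α(P) ∪ α(Q). -/

import Mathlib

/-- The iSAPP algebra of abstract values: `0 < L < A < M`. -/
inductive Val : Type
  | z | L | A | M
  deriving DecidableEq, Repr

instance : Fintype Val :=
  ⟨{Val.z, Val.L, Val.A, Val.M}, fun x => by cases x <;> decide⟩

namespace Val

def toNat : Val → ℕ
  | z => 0 | L => 1 | A => 2 | M => 3

instance : LinearOrder Val := LinearOrder.lift' toNat (by decide)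

/-- The iSAPP addition table: `0` neutral, `L+L = A`, `L+A = A+A = A`, `M` absorbing. -/
def add : Val → Val → Val
  | z, x => x
  | x, z => x
  | M, _ => M
  | _, M => M
  | L, L => A
  | L, A => A
  | A, L => A
  | A, A => A

/-- The iSAPP multiplication table: `0` absorbing, `L` neutral,
`A×A = A`, `A×M = M×A = M×M = M`. -/
def mul : Val → Val → Val
  | z, _ => z
  | _, z => z
  | L, x => x
  | x, L => x
  | A, A => A
  | A, M => M
  | M, A => M
  | M, M => M

end Val

instance : Zero Val := ⟨Val.z⟩
instance : Add Val := ⟨Val.add⟩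
instance : One Val := ⟨Val.L⟩
instance : Mul Val := ⟨Val.mul⟩

instance : CommSemiring Val where
  add := Val.add
  add_assoc := by decide
  zero := Val.z
  zero_add := by decide
  add_zero := by decide
  nsmul := nsmulRec
  add_comm := by decide
  mul := Val.mul
  left_distrib := by decide
  right_distrib := by decide
  zero_mul := by decide
  mul_zero := by decide
  mul_assoc := by decide
  one := Val.L
  one_mul := by decide
  mul_one := by decide
  mul_comm := by decide

/-- Monomial-wise (coefficient-wise) maximum of two polynomials with ℕ coefficients. -/
noncomputable def pUnion {nv : ℕ} (p q : MvPolynomial (Fin nv) ℕ) :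
    MvPolynomial (Fin nv) ℕ :=
  letI := Classical.decEq (Fin nv →₀ ℕ)
  ∑ m ∈ p.support ∪ q.support, MvPolynomial.monomial m (max (p.coeff m) (q.coeff m))

/-- Coefficient-wise order on polynomials. -/
def pLe {nv : ℕ} (p q : MvPolynomial (Fin nv) ℕ) : Prop :=
  ∀ m, p.coeff m ≤ q.coeff m

open Classical in
/-- Abstraction of a single monomial `c·X^m` (as it appears in the canonical form):
a constant `c` contributes `L` (if `c = 1`) or `A` (if `c > 1`) to the last coordinate;
a degree-one monomial `c·Xᵢ` contributes `L` (if `c = 1`) or `A` (if `c > 1`) at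
coordinate `i`; any other monomial contributes `M` at every involved coordinate
(the product rule `α(q·r) = M·α(q) ∪ M·α(r)`). -/
noncomputable def monoAbs {nv : ℕ} (m : Fin nv →₀ ℕ) (c : ℕ) : Fin (nv + 1) → Val :=
  fun i =>
    if h : (i : ℕ) < nv then
      if m ⟨i, h⟩ = 0 then Val.z
      else if (m.sum fun _ e => e) = 1 then (if c = 1 then Val.L else Val.A)
      else Val.M
    else
      if m = 0 then (if c = 0 then Val.z else if c = 1 then Val.L else Val.A)
      else if (m.sum fun _ e => e) = 1 then Val.z
      else if 2 ≤ c then Val.M else Val.z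

/-- Abstraction of a polynomial, as a vector in `Values^{n+1}`:
the sum (in the `Val` semiring) of the abstractions of its monomials. -/
noncomputable def polAbs {nv : ℕ} (p : MvPolynomial (Fin nv) ℕ) : Fin (nv + 1) → Val :=
  fun i => ∑ m ∈ p.support, monoAbs m (p.coeff m) i

namespace ISAPPAux

open Classical

/-- Abstraction of a constant. -/
noncomputable def f (c : ℕ) : Val := if c = 0 then Val.z else if c = 1 then Val.L else Val.A

lemma M_top (x : Val) : x ≤ Val.M := by revert x; decide

lemma add_M (x : Val) : x + Val.M = Val.M := by cases x <;> rfl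

lemma add_z (x : Val) : x + Val.z = x := by cases x <;> rfl

lemma z_add (x : Val) : Val.z + x = x := by cases x <;> rfl

lemma f_mono : Monotone f := by
  intro a b hab
  unfold f
  split_ifs <;> first | omega | decide

lemma f_max (a b : ℕ) : f (max a b) = max (f a) (f b) := f_mono.map_max

lemma sum_zM {ι : Type*} (s : Finset ι) (g : ι → Val)
    (hg : ∀ x ∈ s, g x = Val.z ∨ g x = Val.M) :
    ∑ x ∈ s, g x = if ∃ x ∈ s, g x = Val.M then Val.M else Val.z := by
  classical
  induction s using Finset.induction with
  | empty => rw [Finset.sum_empty, if_neg (by simp)]; rfl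
  | @insert a s hx ih =>
    rw [Finset.sum_insert hx, ih (fun x hxs => hg x (Finset.mem_insert_of_mem hxs))]
    rcases hg a (Finset.mem_insert_self a s) with h | h
    · by_cases he : ∃ x ∈ s, g x = Val.M
      · simp only [if_pos he, h, z_add]
        rw [if_pos]
        obtain ⟨x, hxs, hxM⟩ := he
        exact ⟨x, Finset.mem_insert_of_mem hxs, hxM⟩
      · simp only [if_neg he, h, z_add]
        rw [if_neg]
        rintro ⟨x, hxi, hxM⟩
        rcases Finset.mem_insert.1 hxi with rfl | hxs
        · rw [h] at hxM; exact absurd hxM (by decide)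
        · exact he ⟨x, hxs, hxM⟩
    · rw [h]
      have h1 : Val.M + (if ∃ x ∈ s, g x = Val.M then Val.M else Val.z) = Val.M := by
        split_ifs <;> rfl
      rw [h1, if_pos ⟨a, Finset.mem_insert_self a s, h⟩]

/-- Degree-one monomials containing `a` are `single a 1`. -/
lemma eq_single_of_deg_one {n : ℕ} (m : Fin n →₀ ℕ) (a : Fin n)
    (ha : m a ≠ 0) (hd : (m.sum fun _ e => e) = 1) : m = Finsupp.single a 1 := by
  classical
  have hmem : a ∈ m.support := Finsupp.mem_support_iff.2 ha
  have hsum : (m.sum fun _ e => e) = ∑ x ∈ m.support, m x := rfl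
  have hsub : m.support ⊆ {a} := by
    intro b hb
    simp only [Finset.mem_singleton]
    by_contra hba
    have h2 : ({a, b} : Finset (Fin n)) ⊆ m.support := by
      intro x hx
      rcases Finset.mem_insert.1 hx with rfl | hx
      · exact hmem
      · rw [Finset.mem_singleton] at hx; subst hx; exact hb
    have := Finset.sum_le_sum_of_subset h2 (f := m)
    rw [Finset.sum_pair (fun h => hba h.symm)] at this
    have hb1 : m b ≠ 0 := Finsupp.mem_support_iff.1 hb
    omega
  have hma : m a = 1 := by
    have h1 : ∑ x ∈ m.support, m x = m a := by
      have : m.support = {a} := Finset.Subset.antisymm hsub (Finset.singleton_subset_iff.2 hmem)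
      rw [this, Finset.sum_singleton]
    rw [hsum, h1] at hd
    exact hd
  exact (Finsupp.eq_single_iff).2 ⟨hsub, hma⟩

lemma deg_pos {n : ℕ} (m : Fin n →₀ ℕ) (hm : m ≠ 0) : 1 ≤ m.sum fun _ e => e := by
  classical
  obtain ⟨a, ha⟩ := Finsupp.ne_iff.1 hm
  simp only [Finsupp.coe_zero, Pi.zero_apply] at ha
  have hmem : a ∈ m.support := Finsupp.mem_support_iff.2 ha
  have : m a ≤ ∑ x ∈ m.support, m x :=
    Finset.single_le_sum (fun x _ => Nat.zero_le _) hmem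
  have hsum : (m.sum fun _ e => e) = ∑ x ∈ m.support, m x := rfl
  omega

lemma deg_single {n : ℕ} (a : Fin n) :
    ((Finsupp.single a 1 : Fin n →₀ ℕ).sum fun _ e => e) = 1 := by
  rw [Finsupp.sum_single_index]; rfl

/-- Closed form for `polAbs` at a coordinate `i < nv`. -/
lemma polAbs_lt {nv : ℕ} (p : MvPolynomial (Fin nv) ℕ) (i : Fin (nv + 1))
    (h : (i : ℕ) < nv) :
    polAbs p i =
      if ∃ m ∈ p.support, m ⟨i, h⟩ ≠ 0 ∧ 2 ≤ (m.sum fun _ e => e) then Val.M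
      else f (p.coeff (Finsupp.single ⟨i, h⟩ 1)) := by
  classical
  set a : Fin nv := ⟨i, h⟩
  set e : Fin nv →₀ ℕ := Finsupp.single a 1 with he
  have hcond : ∀ m ∈ p.support.erase e,
      monoAbs m (p.coeff m) i =
        if (m a ≠ 0 ∧ 2 ≤ (m.sum fun _ e => e)) then Val.M else Val.z := by
    intro m hm
    have hne : m ≠ e := Finset.ne_of_mem_erase hm
    unfold monoAbs
    rw [dif_pos h]
    by_cases hma : m a = 0
    · rw [if_pos hma, if_neg (by simp [hma])]
    · rw [if_neg hma]
      have hd1 : (m.sum fun _ e => e) ≠ 1 := by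
        intro hd
        exact hne (eq_single_of_deg_one m a hma hd)
      have hd0 : 1 ≤ m.sum fun _ e => e := deg_pos m (by
        intro h0; apply hma; rw [h0]; rfl)
      rw [if_neg hd1, if_pos ⟨hma, by omega⟩]
  have hzM : ∀ m ∈ p.support.erase e,
      monoAbs m (p.coeff m) i = Val.z ∨ monoAbs m (p.coeff m) i = Val.M := by
    intro m hm
    rw [hcond m hm]
    split_ifs
    · right; rfl
    · left; rfl
  have hex : (∃ m ∈ p.support.erase e, monoAbs m (p.coeff m) i = Val.M) ↔
      (∃ m ∈ p.support, m a ≠ 0 ∧ 2 ≤ (m.sum fun _ e => e)) := by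
    constructor
    · rintro ⟨m, hm, hM⟩
      rw [hcond m hm] at hM
      refine ⟨m, Finset.mem_of_mem_erase hm, ?_⟩
      by_contra hc
      rw [if_neg hc] at hM
      exact absurd hM (by decide)
    · rintro ⟨m, hm, hc⟩
      have hne : m ≠ e := by
        intro hme
        subst hme
        rw [deg_single] at hc
        omega
      refine ⟨m, Finset.mem_erase.2 ⟨hne, hm⟩, ?_⟩
      rw [hcond m (Finset.mem_erase.2 ⟨hne, hm⟩), if_pos hc]
  have habs_e : ∀ c : ℕ, monoAbs e c i = if c = 1 then Val.L else Val.A := by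
    intro c
    unfold monoAbs
    rw [dif_pos h]
    have h1 : e a ≠ 0 := by simp [he]
    rw [if_neg h1, if_pos (deg_single a)]
  unfold polAbs
  by_cases hmem : e ∈ p.support
  · rw [← Finset.sum_erase_add _ _ hmem, sum_zM _ _ hzM, habs_e]
    have hce : p.coeff e ≠ 0 := MvPolynomial.mem_support_iff.1 hmem
    have hfe : (if p.coeff e = 1 then Val.L else Val.A) = f (p.coeff e) := by
      unfold f
      rw [if_neg hce]
    rw [hfe]
    by_cases hE : ∃ m ∈ p.support, m a ≠ 0 ∧ 2 ≤ (m.sum fun _ e => e)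
    · rw [if_pos (hex.2 hE), if_pos hE]
      cases hfc : f (p.coeff e) <;> rfl
    · rw [if_neg (fun hc => hE (hex.1 hc)), if_neg hE, z_add]
  · have herase : p.support.erase e = p.support := Finset.erase_eq_of_notMem hmem
    have hce : p.coeff e = 0 := by
      by_contra hc
      exact hmem (MvPolynomial.mem_support_iff.2 hc)
    rw [hce]
    have hfz : f 0 = Val.z := rfl
    rw [herase] at hzM hex
    rw [hfz, sum_zM _ _ hzM]
    by_cases hE : ∃ m ∈ p.support, m a ≠ 0 ∧ 2 ≤ (m.sum fun _ e => e)
    · rw [if_pos (hex.2 hE), if_pos hE]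
    · rw [if_neg (fun hc => hE (hex.1 hc)), if_neg hE]

/-- Closed form for `polAbs` at the last coordinate. -/
lemma polAbs_last {nv : ℕ} (p : MvPolynomial (Fin nv) ℕ) (i : Fin (nv + 1))
    (h : ¬ (i : ℕ) < nv) :
    polAbs p i =
      if ∃ m ∈ p.support, 2 ≤ (m.sum fun _ e => e) ∧ 2 ≤ p.coeff m then Val.M
      else f (p.coeff 0) := by
  classical
  have hcond : ∀ m ∈ p.support.erase 0,
      monoAbs m (p.coeff m) i =
        if (2 ≤ (m.sum fun _ e => e) ∧ 2 ≤ p.coeff m) then Val.M else Val.z := by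
    intro m hm
    have hne : m ≠ 0 := Finset.ne_of_mem_erase hm
    unfold monoAbs
    rw [dif_neg h, if_neg hne]
    have hd0 : 1 ≤ m.sum fun _ e => e := deg_pos m hne
    by_cases hd1 : (m.sum fun _ e => e) = 1
    · rw [if_pos hd1, if_neg (by omega)]
    · rw [if_neg hd1]
      by_cases hc : 2 ≤ p.coeff m
      · rw [if_pos hc, if_pos ⟨by omega, hc⟩]
      · rw [if_neg hc, if_neg (by tauto)]
  have hzM : ∀ m ∈ p.support.erase 0,
      monoAbs m (p.coeff m) i = Val.z ∨ monoAbs m (p.coeff m) i = Val.M := by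
    intro m hm
    rw [hcond m hm]
    split_ifs
    · right; rfl
    · left; rfl
  have hex : (∃ m ∈ p.support.erase 0, monoAbs m (p.coeff m) i = Val.M) ↔
      (∃ m ∈ p.support, 2 ≤ (m.sum fun _ e => e) ∧ 2 ≤ p.coeff m) := by
    constructor
    · rintro ⟨m, hm, hM⟩
      rw [hcond m hm] at hM
      refine ⟨m, Finset.mem_of_mem_erase hm, ?_⟩
      by_contra hc
      rw [if_neg hc] at hM
      exact absurd hM (by decide)
    · rintro ⟨m, hm, hc⟩
      have hne : m ≠ 0 := by
        intro hme
        subst hme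
        simp only [Finsupp.sum_zero_index] at hc
        omega
      refine ⟨m, Finset.mem_erase.2 ⟨hne, hm⟩, ?_⟩
      rw [hcond m (Finset.mem_erase.2 ⟨hne, hm⟩), if_pos hc]
  have habs_0 : ∀ c : ℕ, monoAbs 0 c i = f c := by
    intro c
    unfold monoAbs f
    rw [dif_neg h, if_pos rfl]
  unfold polAbs
  by_cases hmem : (0 : Fin nv →₀ ℕ) ∈ p.support
  · rw [← Finset.sum_erase_add _ _ hmem, sum_zM _ _ hzM, habs_0]
    by_cases hE : ∃ m ∈ p.support, 2 ≤ (m.sum fun _ e => e) ∧ 2 ≤ p.coeff m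
    · rw [if_pos (hex.2 hE), if_pos hE]
      cases hfc : f (p.coeff 0) <;> rfl
    · rw [if_neg (fun hc => hE (hex.1 hc)), if_neg hE, z_add]
  · have herase : p.support.erase 0 = p.support := Finset.erase_eq_of_notMem hmem
    have hce : p.coeff 0 = 0 := by
      by_contra hc
      exact hmem (MvPolynomial.mem_support_iff.2 hc)
    rw [hce]
    have hfz : f 0 = Val.z := rfl
    rw [herase] at hzM hex
    rw [hfz, sum_zM _ _ hzM]
    by_cases hE : ∃ m ∈ p.support, 2 ≤ (m.sum fun _ e => e) ∧ 2 ≤ p.coeff m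
    · rw [if_pos (hex.2 hE), if_pos hE]
    · rw [if_neg (fun hc => hE (hex.1 hc)), if_neg hE]

lemma coeff_pUnion {nv : ℕ} (p q : MvPolynomial (Fin nv) ℕ) (m : Fin nv →₀ ℕ) :
    (pUnion p q).coeff m = max (p.coeff m) (q.coeff m) := by
  classical
  unfold pUnion
  rw [MvPolynomial.coeff_sum]
  simp only [MvPolynomial.coeff_monomial, Finset.sum_ite_eq']
  split_ifs with hm
  · rfl
  · simp only [Finset.mem_union] at hm
    push_neg at hm
    have h1 : p.coeff m = 0 := by
      by_contra hc; exact hm.1 (MvPolynomial.mem_support_iff.2 hc)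
    have h2 : q.coeff m = 0 := by
      by_contra hc; exact hm.2 (MvPolynomial.mem_support_iff.2 hc)
    rw [h1, h2]
    simp

lemma support_pUnion {nv : ℕ} (p q : MvPolynomial (Fin nv) ℕ) :
    (pUnion p q).support = p.support ∪ q.support := by
  classical
  ext m
  rw [MvPolynomial.mem_support_iff, coeff_pUnion, Finset.mem_union,
    MvPolynomial.mem_support_iff, MvPolynomial.mem_support_iff]
  omega

lemma max_M_left (x : Val) : max Val.M x = Val.M := max_eq_left (M_top x)

lemma max_M_right (x : Val) : max x Val.M = Val.M := max_eq_right (M_top x)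

end ISAPPAux

/-- Lemma `multipolsum` of iSAPP: for multipolynomials (tuples of polynomials, abstracted
columnwise), `α(P ⊔ Q) = α(P) ∪ α(Q)` entrywise. -/
theorem isapp_multipolAbs_pUnion {nv : ℕ}
    (P Q : Fin nv → MvPolynomial (Fin nv) ℕ) :
    (fun (i : Fin (nv + 1)) (j : Fin nv) => polAbs (pUnion (P j) (Q j)) i) =
      fun i j => max (polAbs (P j) i) (polAbs (Q j) i) := by
  classical
  open ISAPPAux in
  funext i j
  set p := P j
  set q := Q j
  by_cases h : (i : ℕ) < nv
  · rw [polAbs_lt (pUnion p q) i h, polAbs_lt p i h, polAbs_lt q i h, support_pUnion,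
      coeff_pUnion]
    have hiff : (∃ m ∈ p.support ∪ q.support, m ⟨i, h⟩ ≠ 0 ∧ 2 ≤ (m.sum fun _ e => e)) ↔
        ((∃ m ∈ p.support, m ⟨i, h⟩ ≠ 0 ∧ 2 ≤ (m.sum fun _ e => e)) ∨
          (∃ m ∈ q.support, m ⟨i, h⟩ ≠ 0 ∧ 2 ≤ (m.sum fun _ e => e))) := by
      constructor
      · rintro ⟨m, hm, hc⟩
        rcases Finset.mem_union.1 hm with hm | hm
        · exact Or.inl ⟨m, hm, hc⟩
        · exact Or.inr ⟨m, hm, hc⟩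
      · rintro (⟨m, hm, hc⟩ | ⟨m, hm, hc⟩)
        · exact ⟨m, Finset.mem_union_left _ hm, hc⟩
        · exact ⟨m, Finset.mem_union_right _ hm, hc⟩
    by_cases h1 : ∃ m ∈ p.support, m ⟨i, h⟩ ≠ 0 ∧ 2 ≤ (m.sum fun _ e => e)
    · rw [if_pos (hiff.2 (Or.inl h1)), if_pos h1, max_M_left]
    · by_cases h2 : ∃ m ∈ q.support, m ⟨i, h⟩ ≠ 0 ∧ 2 ≤ (m.sum fun _ e => e)
      · rw [if_pos (hiff.2 (Or.inr h2)), if_neg h1, if_pos h2, max_M_right]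
      · rw [if_neg (fun hc => (hiff.1 hc).elim h1 h2), if_neg h1, if_neg h2, f_max]
  · rw [polAbs_last (pUnion p q) i h, polAbs_last p i h, polAbs_last q i h, support_pUnion,
      coeff_pUnion]
    simp only [coeff_pUnion]
    have hiff : (∃ m ∈ p.support ∪ q.support,
          2 ≤ (m.sum fun _ e => e) ∧ 2 ≤ max (p.coeff m) (q.coeff m)) ↔
        ((∃ m ∈ p.support, 2 ≤ (m.sum fun _ e => e) ∧ 2 ≤ p.coeff m) ∨
          (∃ m ∈ q.support, 2 ≤ (m.sum fun _ e => e) ∧ 2 ≤ q.coeff m)) := by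
      constructor
      · rintro ⟨m, hm, hd, hc⟩
        rcases le_sup_iff.mp hc with hp | hq
        · exact Or.inl ⟨m, MvPolynomial.mem_support_iff.2 (by omega), hd, hp⟩
        · exact Or.inr ⟨m, MvPolynomial.mem_support_iff.2 (by omega), hd, hq⟩
      · rintro (⟨m, hm, hd, hc⟩ | ⟨m, hm, hd, hc⟩)
        · exact ⟨m, Finset.mem_union_left _ hm, hd, le_max_of_le_left hc⟩
        · exact ⟨m, Finset.mem_union_right _ hm, hd, le_max_of_le_right hc⟩
    by_cases h1 : ∃ m ∈ p.support, 2 ≤ (m.sum fun _ e => e) ∧ 2 ≤ p.coeff m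
    · rw [if_pos (hiff.2 (Or.inl h1)), if_pos h1, max_M_left]
    · by_cases h2 : ∃ m ∈ q.support, 2 ≤ (m.sum fun _ e => e) ∧ 2 ≤ q.coeff m
      · rw [if_pos (hiff.2 (Or.inr h2)), if_neg h1, if_pos h2, max_M_right]
      · rw [if_neg (fun hc => (hiff.1 hc).elim h1 h2), if_neg h1, if_neg h2, f_max]
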